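/- Let cps be a constrained path schema over a finite alphabet Σ with segments p_1, …, p_k ∈ Σ*, loops l_1, …, l_k ∈ Σ^+ and constraint set D ⊆ ℕ^{k−1}, where D is presented in semilinear form by a finite set of base vectors B0 and period vectors P_1, …, P_α, all of whose components are at most M. Let B be a Büchi automaton over Σ with state set Q. Then L(cps) ∩ L(B) ≠ ∅ if and only if there exists y ∈ D with y_i ≤ M + 2·|Q|^k·α·M for every i ∈ {1,…,k−1} such that p_1 l_1^{y_1} ⋯ p_{k−1} l_{k−1}^{y_{k−1}} p_k l_k^ω ∈ L(B). -/

import Mathlib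

namespace Stmt6

variable {Γ : Type*}

/-- `m`-fold concatenation of a finite word. -/
def lpow (u : List Γ) : ℕ → List Γ
  | 0 => []
  | m + 1 => u ++ lpow u m

/-- Concatenation of a finite word with an ω-word. -/
def wcat (u : List Γ) (w : ℕ → Γ) : ℕ → Γ := fun n =>
  if h : n < u.length then u.get ⟨n, h⟩ else w (n - u.length)

/-- Infinite repetition of a nonempty finite word. -/
def womega (u : List Γ) (hu : u ≠ []) : ℕ → Γ := fun n =>
  u.get ⟨n % u.length, Nat.mod_lt _ (List.length_pos_iff.mpr hu)⟩

/-- The finite word `p 0 · (l 0)^(n 0) · ⋯ · p (i-1) · (l (i-1))^(n (i-1))`. -/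
def schemaPrefix (p l : ℕ → List Γ) (n : ℕ → ℕ) : ℕ → List Γ
  | 0 => []
  | i + 1 => schemaPrefix p l n i ++ (p i ++ lpow (l i) (n i))

/-- The ω-word `p_1 l_1^{n_1} ⋯ p_{k-1} l_{k-1}^{n_{k-1}} p_k l_k^ω`
(with `0`-based indexing of the segments `p` and loops `l`). -/
def schemaWord (k : ℕ) (p l : ℕ → List Γ) (n : ℕ → ℕ) (h : l (k - 1) ≠ []) : ℕ → Γ :=
  wcat (schemaPrefix p l n (k - 1) ++ p (k - 1)) (womega (l (k - 1)) h)

/-- Extension of a vector in `ℕ^d` to a function on all of `ℕ` (by `0`). -/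
def extFun {d : ℕ} (n : Fin d → ℕ) : ℕ → ℕ := fun i => if h : i < d then n ⟨i, h⟩ else 0

/-- The language of the constrained path schema with segments `p`, loops `l`
and constraint set `D ⊆ ℕ^(k-1)`. -/
def cpsLang (k : ℕ) (p l : ℕ → List Γ) (D : Set (Fin (k - 1) → ℕ))
    (h : l (k - 1) ≠ []) : Set (ℕ → Γ) :=
  {w | ∃ n ∈ D, w = schemaWord k p l (extFun n) h}

/-- A Büchi automaton with states `Q` and alphabet `Γ`. -/
structure Buchi (Q Γ : Type*) where
  init : Q
  trans : Set (Q × Γ × Q)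
  acc : Set Q

/-- `B` accepts the ω-word `w`. -/
def Buchi.Accepts {Q Γ : Type*} (B : Buchi Q Γ) (w : ℕ → Γ) : Prop :=
  ∃ ρ : ℕ → Q, ρ 0 = B.init ∧ (∀ i, (ρ i, w i, ρ (i + 1)) ∈ B.trans) ∧
    ∀ n, ∃ m, n ≤ m ∧ ρ m ∈ B.acc

section Aux

variable {Q : Type*}

/-- A finite chain of length `n` from `q` to `r` with step relation `T t` at position `t`. -/
def ChainF (T : ℕ → Q → Q → Prop) (n : ℕ) (q r : Q) : Prop :=
  ∃ f : ℕ → Q, f 0 = q ∧ f n = r ∧ ∀ t < n, T t (f t) (f (t + 1))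

/-- `n`-fold iteration of a relation. -/
def RelPowF (R : Q → Q → Prop) (n : ℕ) (q r : Q) : Prop := ChainF (fun _ => R) n q r

/-- A finite run of `B` on the word `u` from `q` to `r`. -/
def FinRunF (B : Buchi Q Γ) (q : Q) (u : List Γ) (r : Q) : Prop :=
  ChainF (fun t x y => ∀ c, u[t]? = some c → (x, c, y) ∈ B.trans) u.length q r

/-- `B` accepts `w` when started from state `q`. -/
def AcceptsFrom (B : Buchi Q Γ) (q : Q) (w : ℕ → Γ) : Prop :=
  ∃ ρ : ℕ → Q, ρ 0 = q ∧ (∀ i, (ρ i, w i, ρ (i + 1)) ∈ B.trans) ∧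
    ∀ n, ∃ m, n ≤ m ∧ ρ m ∈ B.acc

theorem chain_zero {T : ℕ → Q → Q → Prop} {q r : Q} : ChainF T 0 q r ↔ q = r := by
  constructor
  · rintro ⟨f, h0, h1, -⟩; rw [← h0, h1]
  · rintro rfl; exact ⟨fun _ => q, rfl, rfl, by omega⟩

theorem chain_one {T : ℕ → Q → Q → Prop} {q r : Q} : ChainF T 1 q r ↔ T 0 q r := by
  constructor
  · rintro ⟨f, h0, h1, hs⟩; rw [← h0, ← h1]; exact hs 0 one_pos
  · intro h
    refine ⟨fun t => if t = 0 then q else r, by simp, by simp, fun t ht => ?_⟩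
    interval_cases t
    simpa using h

theorem chain_congr {T T' : ℕ → Q → Q → Prop} {n : ℕ} {q r : Q}
    (h : ∀ t < n, ∀ x y, T t x y ↔ T' t x y) : ChainF T n q r ↔ ChainF T' n q r := by
  constructor <;> rintro ⟨f, h0, h1, hs⟩ <;> exact ⟨f, h0, h1, fun t ht =>
    by first | exact (h t ht _ _).mp (hs t ht) | exact (h t ht _ _).mpr (hs t ht)⟩

theorem chain_cast {T : ℕ → Q → Q → Prop} {n n' : ℕ} {q r : Q} (h : n = n') :
    ChainF T n q r ↔ ChainF T n' q r := by rw [h]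

theorem chain_add {T : ℕ → Q → Q → Prop} {m n : ℕ} {q r : Q} :
    ChainF T (m + n) q r ↔ ∃ s, ChainF T m q s ∧ ChainF (fun t => T (m + t)) n s r := by
  constructor
  · rintro ⟨f, h0, hn, hs⟩
    exact ⟨f m, ⟨f, h0, rfl, fun t ht => hs t (by omega)⟩,
      ⟨fun t => f (m + t), rfl, hn, fun t ht => hs (m + t) (by omega)⟩⟩
  · rintro ⟨s, ⟨f1, h10, h1m, h1s⟩, ⟨f2, h20, h2n, h2s⟩⟩
    refine ⟨fun t => if t < m then f1 t else f2 (t - m), ?_, ?_, ?_⟩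
    · by_cases h : 0 < m
      · simpa [h] using h10
      · have hm : m = 0 := by omega
        subst hm
        simpa using h20.trans (h1m.symm.trans h10)
    · have : ¬ (m + n < m) := by omega
      simp only [this, if_false]
      simpa using h2n
    · intro t ht
      rcases lt_trichotomy (t + 1) m with h1 | h1 | h1
      · simp only [if_pos (by omega : t < m), if_pos h1]
        exact h1s t (by omega)
      · simp only [if_pos (by omega : t < m), if_neg (by omega : ¬ t + 1 < m)]
        have : f2 (t + 1 - m) = f1 (t + 1) := by
          rw [show t + 1 - m = 0 by omega, h20, ← h1m, h1]
        rw [this]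
        exact h1s t (by omega)
      · simp only [if_neg (by omega : ¬ t < m), if_neg (by omega : ¬ t + 1 < m)]
        have h2 : T (m + (t - m)) (f2 (t - m)) (f2 (t - m + 1)) := h2s (t - m) (by omega)
        have e1 : m + (t - m) = t := by omega
        have e2 : t - m + 1 = t + 1 - m := by omega
        rw [e1, e2] at h2
        exact h2

theorem relpow_zero {R : Q → Q → Prop} {q r : Q} : RelPowF R 0 q r ↔ q = r := chain_zero

theorem relpow_add {R : Q → Q → Prop} {m n : ℕ} {q r : Q} :
    RelPowF R (m + n) q r ↔ ∃ s, RelPowF R m q s ∧ RelPowF R n s r := chain_add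

theorem relpow_succ {R : Q → Q → Prop} {n : ℕ} {q r : Q} :
    RelPowF R (n + 1) q r ↔ ∃ s, R q s ∧ RelPowF R n s r := by
  rw [show n + 1 = 1 + n from Nat.add_comm n 1]
  rw [show (RelPowF R (1 + n) q r) = ChainF (fun _ => R) (1 + n) q r from rfl, chain_add]
  exact exists_congr fun s => and_congr chain_one Iff.rfl

theorem relpow_mul {R : Q → Q → Prop} {a p : ℕ} {q r : Q} :
    RelPowF R (a * p) q r ↔ RelPowF (fun x y => RelPowF R p x y) a q r := by
  induction a generalizing q with
  | zero => simp [relpow_zero]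
  | succ a ih =>
    rw [show (a + 1) * p = p + a * p by ring, relpow_add, relpow_succ]
    exact exists_congr fun s => and_congr Iff.rfl (ih)

end Aux
section Aux2

variable {Q : Type*}

theorem finrun_nil {B : Buchi Q Γ} {q r : Q} : FinRunF B q [] r ↔ q = r := chain_zero

theorem finrun_append {B : Buchi Q Γ} {q r : Q} {u v : List Γ} :
    FinRunF B q (u ++ v) r ↔ ∃ s, FinRunF B q u s ∧ FinRunF B s v r := by
  unfold FinRunF
  rw [chain_cast (show (u ++ v).length = u.length + v.length from List.length_append), chain_add]
  refine exists_congr fun s => and_congr (chain_congr ?_) (chain_congr ?_)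
  · intro t ht x y
    rw [List.getElem?_append_left ht]
  · intro t ht x y
    rw [List.getElem?_append_right (by omega : u.length ≤ u.length + t),
      show u.length + t - u.length = t by omega]

theorem finrun_lpow {B : Buchi Q Γ} {u : List Γ} {n : ℕ} {q r : Q} :
    FinRunF B q (lpow u n) r ↔ RelPowF (fun x y => FinRunF B x u y) n q r := by
  induction n generalizing q with
  | zero => rw [show lpow u 0 = [] from rfl, finrun_nil, relpow_zero]
  | succ n ih =>
    rw [show lpow u (n + 1) = u ++ lpow u n from rfl, finrun_append, relpow_succ]
    exact exists_congr fun s => and_congr Iff.rfl ih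

theorem wcat_lt {u : List Γ} {w : ℕ → Γ} {n : ℕ} (h : n < u.length) :
    wcat u w n = u[n]'h := by
  unfold wcat; rw [dif_pos h]; rfl

theorem wcat_ge {u : List Γ} {w : ℕ → Γ} {n : ℕ} (h : u.length ≤ n) :
    wcat u w n = w (n - u.length) := by
  unfold wcat; rw [dif_neg (by omega)]

theorem acceptsFrom_wcat {B : Buchi Q Γ} {q : Q} {u : List Γ} {w : ℕ → Γ} :
    AcceptsFrom B q (wcat u w) ↔ ∃ r, FinRunF B q u r ∧ AcceptsFrom B r w := by
  constructor
  · rintro ⟨ρ, h0, hs, ha⟩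
    refine ⟨ρ u.length, ⟨ρ, h0, rfl, fun t ht c hc => ?_⟩,
      ⟨fun t => ρ (u.length + t), rfl, fun i => ?_, fun n => ?_⟩⟩
    · have := hs t
      rw [wcat_lt ht] at this
      rw [List.getElem?_eq_getElem ht] at hc
      cases hc
      exact this
    · have := hs (u.length + i)
      rwa [wcat_ge (by omega), show u.length + i - u.length = i by omega] at this
    · obtain ⟨m, hm, hacc⟩ := ha (u.length + n)
      refine ⟨m - u.length, by omega, ?_⟩
      show ρ (u.length + (m - u.length)) ∈ B.acc
      rwa [show u.length + (m - u.length) = m by omega]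
  · rintro ⟨r, ⟨f, hf0, hfl, hfs⟩, ⟨ρ, h0, hs, ha⟩⟩
    refine ⟨fun t => if t < u.length then f t else ρ (t - u.length), ?_, fun i => ?_, fun n => ?_⟩
    · by_cases h : 0 < u.length
      · simpa [h] using hf0
      · have h' : u.length = 0 := by omega
        simp only [h', Nat.lt_irrefl, if_false, Nat.sub_zero]
        rw [h0, ← hfl, h', hf0]
    · rcases lt_trichotomy (i + 1) u.length with h1 | h1 | h1
      · simp only [if_pos (by omega : i < u.length), if_pos h1]
        rw [wcat_lt (by omega : i < u.length)]
        exact hfs i (by omega) _ (List.getElem?_eq_getElem _)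
      · have hfl' : f (i + 1) = r := by rw [h1, hfl]
        simp only [if_pos (by omega : i < u.length), if_neg (by omega : ¬ i + 1 < u.length)]
        rw [wcat_lt (by omega : i < u.length),
          show i + 1 - u.length = 0 by omega, h0, ← hfl']
        exact hfs i (by omega) _ (List.getElem?_eq_getElem _)
      · simp only [if_neg (by omega : ¬ i < u.length), if_neg (by omega : ¬ i + 1 < u.length)]
        rw [wcat_ge (by omega : u.length ≤ i)]
        have := hs (i - u.length)
        rwa [show i - u.length + 1 = i + 1 - u.length by omega] at this
    · obtain ⟨m, hm, hacc⟩ := ha n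
      refine ⟨u.length + m, by omega, ?_⟩
      simpa [show ¬ u.length + m < u.length by omega] using hacc

end Aux2
section Aux3

variable {Q : Type*}

theorem chain_delete {R : Q → Q → Prop} {n t t' : ℕ} (htt : t < t') (htn : t' ≤ n)
    (f : ℕ → Q) (hstep : ∀ s < n, R (f s) (f (s + 1))) (heq : f t = f t') :
    RelPowF R (n - (t' - t)) (f 0) (f n) := by
  refine ⟨fun s => if s ≤ t then f s else f (s + (t' - t)), by simp, ?_, ?_⟩
  · by_cases hc : n - (t' - t) ≤ t
    · have h1 : n - (t' - t) = t := by omega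
      have h2 : n = t' := by omega
      beta_reduce
      rw [if_pos hc, h1, heq, h2]
    · simp only [if_neg hc]
      congr 1
      omega
  · intro s hs
    by_cases h1 : s + 1 ≤ t
    · simp only [if_pos (by omega : s ≤ t), if_pos h1]
      exact hstep s (by omega)
    · by_cases h2 : s ≤ t
      · have hst : s = t := by omega
        subst hst
        simp only [if_pos (le_refl s), if_neg h1]
        rw [heq, show s + 1 + (t' - s) = t' + 1 by omega]
        exact hstep t' (by omega)
      · simp only [if_neg h2, if_neg h1]
        rw [show s + 1 + (t' - t) = s + (t' - t) + 1 by omega]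
        exact hstep (s + (t' - t)) (by omega)

theorem reduce_one [Fintype Q] {d : ℕ} (S : ℕ → Q → Q → Prop) (q r : ℕ → Q) (a : ℕ)
    (h : ∀ i < d, RelPowF (S i) a (q i) (r i)) :
    ∃ a' ≤ Fintype.card Q ^ d, ∀ i < d, RelPowF (S i) a' (q i) (r i) := by
  induction a using Nat.strong_induction_on with
  | _ a ih =>
    by_cases ha : a ≤ Fintype.card Q ^ d
    · exact ⟨a, ha, h⟩
    · push_neg at ha
      choose f hf0 hfa hfs using h
      have hcard : Fintype.card (Fin d → Q) < Fintype.card (Fin (a + 1)) := by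
        rw [Fintype.card_fun, Fintype.card_fin, Fintype.card_fin]
        omega
      obtain ⟨t, t', hne, heq⟩ :=
        Fintype.exists_ne_map_eq_of_card_lt (fun (t : Fin (a + 1)) (i : Fin d) => f i i.2 t) hcard
      have hne' : (t : ℕ) ≠ (t' : ℕ) := fun hc => hne (Fin.ext hc)
      obtain ⟨t0, t1, ht01, ht1a, heq'⟩ :
          ∃ t0 t1 : ℕ, t0 < t1 ∧ t1 ≤ a ∧ ∀ i (hi : i < d), f i hi t0 = f i hi t1 := by
        rcases Nat.lt_or_ge (t : ℕ) (t' : ℕ) with hlt | hge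
        · exact ⟨t, t', hlt, by omega, fun i hi => congrFun heq ⟨i, hi⟩⟩
        · exact ⟨t', t, by omega, by omega, fun i hi => (congrFun heq ⟨i, hi⟩).symm⟩
      refine ih (a - (t1 - t0)) (by omega) fun i hi => ?_
      have := chain_delete ht01 ht1a (f i hi) (hfs i hi) (heq' i hi)
      rwa [hf0 i hi, hfa i hi] at this

theorem reduce_all [Fintype Q] {d α : ℕ} (R : ℕ → Q → Q → Prop) (q r : ℕ → Q)
    (b : ℕ → ℕ) (P : Fin α → ℕ → ℕ) (a : Fin α → ℕ)
    (h : ∀ i < d, RelPowF (R i) (b i + ∑ j, a j * P j i) (q i) (r i)) :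
    ∃ a' : Fin α → ℕ, (∀ j, a' j ≤ Fintype.card Q ^ d) ∧
      ∀ i < d, RelPowF (R i) (b i + ∑ j, a' j * P j i) (q i) (r i) := by
  set C := Fintype.card Q ^ d with hC
  suffices H : ∀ N (a : Fin α → ℕ), ∑ j, a j = N →
      (∀ i < d, RelPowF (R i) (b i + ∑ j, a j * P j i) (q i) (r i)) →
      ∃ a' : Fin α → ℕ, (∀ j, a' j ≤ C) ∧
        ∀ i < d, RelPowF (R i) (b i + ∑ j, a' j * P j i) (q i) (r i) from
    H _ a rfl h
  intro N
  induction N using Nat.strong_induction_on with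
  | _ N ih =>
    intro a hsum h
    by_cases hall : ∀ j, a j ≤ C
    · exact ⟨a, hall, h⟩
    · push_neg at hall
      obtain ⟨j0, hj0⟩ := hall
      have hdec : ∀ i, b i + ∑ j, a j * P j i =
          (b i + ∑ j ∈ Finset.univ.erase j0, a j * P j i) + a j0 * P j0 i := by
        intro i
        rw [← Finset.add_sum_erase _ _ (Finset.mem_univ j0)]
        ring
      have h2 : ∀ i, i < d → ∃ sm,
          RelPowF (R i) (b i + ∑ j ∈ Finset.univ.erase j0, a j * P j i) (q i) sm ∧
          RelPowF (fun x y => RelPowF (R i) (P j0 i) x y) (a j0) sm (r i) := by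
        intro i hi
        have hh := h i hi
        rw [hdec i, relpow_add] at hh
        obtain ⟨sm, hh1, hh2⟩ := hh
        exact ⟨sm, hh1, relpow_mul.mp hh2⟩
      choose sm hsm1 hsm2 using h2
      set smf : ℕ → Q := fun i => if hi : i < d then sm i hi else q i with hsmf
      obtain ⟨c, hc, hc2⟩ := reduce_one (fun i x y => RelPowF (R i) (P j0 i) x y) smf r (a j0)
        (fun i hi => by
          have e : smf i = sm i hi := by simp [hsmf, hi]
          rw [e]; exact hsm2 i hi)
      set a' := Function.update a j0 c with ha'
      have hsum' : ∑ j, a' j = c + ∑ j ∈ Finset.univ.erase j0, a j := by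
        rw [ha', ← Finset.add_sum_erase _ _ (Finset.mem_univ j0), Function.update_self]
        congr 1
        exact Finset.sum_congr rfl fun j hj =>
          Function.update_of_ne (Finset.ne_of_mem_erase hj) _ _
      have hsumold : ∑ j, a j = a j0 + ∑ j ∈ Finset.univ.erase j0, a j :=
        (Finset.add_sum_erase _ _ (Finset.mem_univ j0)).symm
      refine ih (∑ j, a' j) (by omega) a' rfl fun i hi => ?_
      have hsum'' : b i + ∑ j, a' j * P j i =
          (b i + ∑ j ∈ Finset.univ.erase j0, a j * P j i) + c * P j0 i := by
        rw [ha', ← Finset.add_sum_erase _ (fun j => Function.update a j0 c j * P j i)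
          (Finset.mem_univ j0), Function.update_self]
        have : ∑ j ∈ Finset.univ.erase j0, Function.update a j0 c j * P j i =
            ∑ j ∈ Finset.univ.erase j0, a j * P j i :=
          Finset.sum_congr rfl fun j hj => by
            rw [Function.update_of_ne (Finset.ne_of_mem_erase hj)]
        rw [this]
        ring
      rw [hsum'', relpow_add]
      have e : smf i = sm i hi := by simp [hsmf, hi]
      refine ⟨smf i, by rw [e]; exact hsm1 i hi, ?_⟩
      exact relpow_mul.mpr (hc2 i hi)

end Aux3
section Aux4

variable {Q : Type*}

theorem finrun_schemaPrefix {B : Buchi Q Γ} {p l : ℕ → List Γ} {n : ℕ → ℕ} {m : ℕ} {q r : Q} :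
    FinRunF B q (schemaPrefix p l n m) r ↔
      ∃ g : ℕ → Q, g 0 = q ∧ g m = r ∧ ∀ i < m, ∃ s, FinRunF B (g i) (p i) s ∧
        RelPowF (fun x y => FinRunF B x (l i) y) (n i) s (g (i + 1)) := by
  induction m generalizing r with
  | zero =>
    rw [show schemaPrefix p l n 0 = [] from rfl, finrun_nil]
    constructor
    · rintro rfl; exact ⟨fun _ => q, rfl, rfl, by omega⟩
    · rintro ⟨g, h0, hm, -⟩; rw [← h0, hm]
  | succ m ih =>
    rw [show schemaPrefix p l n (m + 1) = schemaPrefix p l n m ++ (p m ++ lpow (l m) (n m))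
      from rfl, finrun_append]
    constructor
    · rintro ⟨x, hx1, hx2⟩
      rw [ih] at hx1
      obtain ⟨g, hg0, hgm, hgs⟩ := hx1
      rw [finrun_append] at hx2
      obtain ⟨s, hs1, hs2⟩ := hx2
      rw [finrun_lpow] at hs2
      refine ⟨fun t => if t = m + 1 then r else g t, by simp [hg0], by simp, fun i hi => ?_⟩
      by_cases him : i < m
      · simp only [if_neg (by omega : ¬ i = m + 1), if_neg (by omega : ¬ i + 1 = m + 1)]
        exact hgs i him
      · have hi' : i = m := by omega
        subst hi'
        simp only [if_neg (by omega : ¬ i = i + 1), if_pos rfl]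
        rw [hgm]
        exact ⟨s, hs1, hs2⟩
    · rintro ⟨g, hg0, hgm, hgs⟩
      obtain ⟨s, hs1, hs2⟩ := hgs m (by omega)
      rw [hgm] at hs2
      exact ⟨g m, ih.mpr ⟨g, hg0, rfl, fun i hi => hgs i (by omega)⟩,
        finrun_append.mpr ⟨s, hs1, finrun_lpow.mpr hs2⟩⟩

theorem accepts_schemaWord {B : Buchi Q Γ} {k : ℕ} {p l : ℕ → List Γ}
    (h : l (k - 1) ≠ []) (n : ℕ → ℕ) :
    B.Accepts (schemaWord k p l n h) ↔
      ∃ g s : ℕ → Q, g 0 = B.init ∧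
        (∀ i < k - 1, FinRunF B (g i) (p i) (s i) ∧
          RelPowF (fun x y => FinRunF B x (l i) y) (n i) (s i) (g (i + 1))) ∧
        FinRunF B (g (k - 1)) (p (k - 1)) (s (k - 1)) ∧
        AcceptsFrom B (s (k - 1)) (womega (l (k - 1)) h) := by
  have hA : B.Accepts (schemaWord k p l n h) ↔
      AcceptsFrom B B.init (schemaWord k p l n h) := Iff.rfl
  rw [hA]
  unfold schemaWord
  rw [acceptsFrom_wcat]
  constructor
  · rintro ⟨qe, hrun, hacc⟩
    rw [finrun_append] at hrun
    obtain ⟨x, hx1, hx2⟩ := hrun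
    rw [finrun_schemaPrefix] at hx1
    obtain ⟨g, hg0, hgm, hgs⟩ := hx1
    choose s hs1 hs2 using hgs
    refine ⟨g, fun i => if hi : i < k - 1 then s i hi else qe, hg0, fun i hi => ?_, ?_, ?_⟩
    · beta_reduce
      rw [dif_pos hi]
      exact ⟨hs1 i hi, hs2 i hi⟩
    · beta_reduce
      rw [dif_neg (lt_irrefl _), hgm]
      exact hx2
    · beta_reduce
      rw [dif_neg (lt_irrefl _)]
      exact hacc
  · rintro ⟨g, s, hg0, hmid, hlast, hacc⟩
    exact ⟨s (k - 1), finrun_append.mpr ⟨g (k - 1),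
      finrun_schemaPrefix.mpr ⟨g, hg0, rfl, fun i hi => ⟨s i, (hmid i hi).1, (hmid i hi).2⟩⟩,
      hlast⟩, hacc⟩

theorem extFun_semilin {d α : ℕ} (b : Fin d → ℕ) (P : Fin α → Fin d → ℕ) (a : Fin α → ℕ)
    (i : ℕ) :
    extFun (fun i => b i + ∑ j, a j * P j i) i = extFun b i + ∑ j, a j * extFun (P j) i := by
  unfold extFun
  split_ifs with hh
  · simp
  · simp

end Aux4
/-- Small-witness theorem for the intersection of a constrained path schema
(whose constraint set is presented in semilinear form with all components of
bases and periods at most `M`) with a Büchi automaton. -/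
theorem cps_buchi_intersection {Q Γ : Type*} [Fintype Q] [Fintype Γ]
    (B : Buchi Q Γ) (k : ℕ) (hk : 0 < k) (p l : ℕ → List Γ)
    (hl : ∀ i, i < k → l i ≠ [])
    (D : Set (Fin (k - 1) → ℕ)) (B0 : Finset (Fin (k - 1) → ℕ)) (α : ℕ)
    (P : Fin α → Fin (k - 1) → ℕ) (M : ℕ)
    (hD : D = {y | ∃ b ∈ B0, ∃ a : Fin α → ℕ, y = fun i => b i + ∑ j, a j * P j i})
    (hB0 : ∀ b ∈ B0, ∀ i, b i ≤ M) (hP : ∀ j i, P j i ≤ M) :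
    (cpsLang k p l D (hl (k - 1) (by omega)) ∩ {w | B.Accepts w}).Nonempty ↔
      ∃ y ∈ D, (∀ i, y i ≤ M + 2 * Fintype.card Q ^ k * α * M) ∧
        B.Accepts (schemaWord k p l (extFun y) (hl (k - 1) (by omega))) := by
  constructor
  · rintro ⟨w, hw, hacc⟩
    obtain ⟨n, hnD, rfl⟩ := hw
    have hacc' : B.Accepts (schemaWord k p l (extFun n) (hl (k - 1) (by omega))) := hacc
    -- Q is nonempty
    obtain ⟨ρ, -, -, -⟩ := hacc'
    have hQ : 1 ≤ Fintype.card Q := Fintype.card_pos_iff.mpr ⟨ρ 0⟩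
    clear ρ
    rw [hD] at hnD
    obtain ⟨bv, hbv, a, rfl⟩ := hnD
    have hacc2 : B.Accepts (schemaWord k p l (extFun fun i => bv i + ∑ j, a j * P j i)
        (hl (k - 1) (by omega))) := hacc
    rw [accepts_schemaWord] at hacc2
    obtain ⟨g, s, hg0, hmid, hlast, haccw⟩ := hacc2
    have hloop : ∀ i < k - 1, RelPowF (fun x y => FinRunF B x (l i) y)
        (extFun bv i + ∑ j, a j * extFun (P j) i) (s i) (g (i + 1)) := by
      intro i hi
      rw [← extFun_semilin]
      exact (hmid i hi).2
    obtain ⟨a', ha'le, ha'run⟩ := reduce_all (d := k - 1)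
      (fun i x y => FinRunF B x (l i) y) s (fun i => g (i + 1))
      (extFun bv) (fun j i => extFun (P j) i) a hloop
    refine ⟨fun i => bv i + ∑ j, a' j * P j i, ?_, ?_, ?_⟩
    · rw [hD]
      exact ⟨bv, hbv, a', rfl⟩
    · intro i
      have h1 : ∑ j, a' j * P j i ≤ ∑ j : Fin α, Fintype.card Q ^ (k - 1) * M :=
        Finset.sum_le_sum fun j _ => Nat.mul_le_mul (ha'le j) (hP j i)
      have h2 : ∑ j : Fin α, Fintype.card Q ^ (k - 1) * M
          = α * (Fintype.card Q ^ (k - 1) * M) := by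
        rw [Finset.sum_const, Finset.card_univ, Fintype.card_fin, smul_eq_mul]
      have h3 : Fintype.card Q ^ (k - 1) ≤ Fintype.card Q ^ k :=
        Nat.pow_le_pow_right hQ (by omega)
      have h4 : α * (Fintype.card Q ^ (k - 1) * M) ≤ 2 * Fintype.card Q ^ k * α * M := by
        calc α * (Fintype.card Q ^ (k - 1) * M) ≤ α * (Fintype.card Q ^ k * M) := by
              exact Nat.mul_le_mul_left _ (Nat.mul_le_mul_right _ h3)
          _ = 1 * (Fintype.card Q ^ k * α * M) := by ring
          _ ≤ 2 * (Fintype.card Q ^ k * α * M) := Nat.mul_le_mul_right _ (by norm_num)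
          _ = 2 * Fintype.card Q ^ k * α * M := by ring
      have h5 := hbv  -- keep
      have hbi : bv i ≤ M := hB0 bv hbv i
      show bv i + ∑ j, a' j * P j i ≤ M + 2 * Fintype.card Q ^ k * α * M
      omega
    · rw [accepts_schemaWord]
      refine ⟨g, s, hg0, fun i hi => ⟨(hmid i hi).1, ?_⟩, hlast, haccw⟩
      rw [extFun_semilin]
      exact ha'run i hi
  · rintro ⟨y, hyD, -, hacc⟩
    exact ⟨schemaWord k p l (extFun y) (hl (k - 1) (by omega)), ⟨y, hyD, rfl⟩, hacc⟩

end Stmt6
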